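/- The Gelfand–Zetlin family is Poisson commutative: for all 1 ≤ k, l ≤ N, all coefficients of the polynomials I_k(λ) = det(λ − u)_k and I_l(λ) = det(λ − u)_l pairwise Poisson-commute with respect to the Lie–Poisson bracket on gl(N)*. -/

import Mathlib

/-- The coordinate function `u^{ij}` on `gl(N,ℝ)*`. -/
noncomputable def u {N : ℕ} (i j : Fin N) : MvPolynomial (Fin N × Fin N) ℝ :=
  MvPolynomial.X (i, j)

/-- The Lie–Poisson bracket on polynomial functions on `gl(N,ℝ)*`. -/
noncomputable def pb {N : ℕ} (P Q : MvPolynomial (Fin N × Fin N) ℝ) :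
    MvPolynomial (Fin N × Fin N) ℝ :=
  ∑ i : Fin N, ∑ j : Fin N, ∑ k : Fin N, ∑ l : Fin N,
    MvPolynomial.pderiv (i, j) P * MvPolynomial.pderiv (k, l) Q *
      ((if j = k then u i l else 0) - (if l = i then u k j else 0))

/-- The matrix of coordinate functions `u = (u^{ij})`. -/
noncomputable def Umat (N : ℕ) :
    Matrix (Fin N) (Fin N) (MvPolynomial (Fin N × Fin N) ℝ) :=
  fun i j => u i j

/-- `I_k(λ) = det(λ − u)_k`, the k-th leading principal minor of `λ·Id − u`. -/
noncomputable def Ipoly {N : ℕ} (k : ℕ) (hk : k ≤ N) :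
    Polynomial (MvPolynomial (Fin N × Fin N) ℝ) :=
  (((Umat N).charmatrix).submatrix (Fin.castLE hk) (Fin.castLE hk)).det

open MvPolynomial Polynomial Matrix Finset

/-! ### Coefficientwise partial derivative on polynomials over `MvPolynomial` -/

/-- Apply `pderiv x` to each coefficient of a polynomial. -/
noncomputable def Dl {σ : Type*} [DecidableEq σ] (x : σ) :
    Polynomial (MvPolynomial σ ℝ) →+ Polynomial (MvPolynomial σ ℝ) where
  toFun p := ⟨.ofCoeff (Finsupp.mapRange (pderiv x) (map_zero _) p.toFinsupp.coeff)⟩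
  map_zero' := by
    apply Polynomial.ext; intro n
    simp [Polynomial.coeff]
  map_add' p q := by
    apply Polynomial.ext; intro n
    simp only [Polynomial.coeff_ofFinsupp, Finsupp.mapRange_apply, Polynomial.coeff_add,
      Polynomial.toFinsupp_apply, map_add]

variable {σ : Type*} [DecidableEq σ]

@[simp] lemma Dl_coeff (x : σ) (p : Polynomial (MvPolynomial σ ℝ)) (n : ℕ) :
    (Dl x p).coeff n = pderiv x (p.coeff n) := by
  rcases p with ⟨f⟩
  simp [Dl, Polynomial.coeff]

lemma Dl_mul (x : σ) (p q : Polynomial (MvPolynomial σ ℝ)) :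
    Dl x (p * q) = Dl x p * q + p * Dl x q := by
  apply Polynomial.ext; intro n
  simp only [Dl_coeff, Polynomial.coeff_add, Polynomial.coeff_mul, map_sum, pderiv_mul]
  rw [← Finset.sum_add_distrib]

@[simp] lemma Dl_C (x : σ) (r : MvPolynomial σ ℝ) :
    Dl x (Polynomial.C r) = Polynomial.C (pderiv x r) := by
  apply Polynomial.ext; intro n
  simp [Polynomial.coeff_C, apply_ite (pderiv x)]

@[simp] lemma Dl_one (x : σ) : Dl x (1 : Polynomial (MvPolynomial σ ℝ)) = 0 := by
  rw [← Polynomial.C_1, Dl_C, pderiv_one, Polynomial.C_0]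

@[simp] lemma Dl_X (x : σ) : Dl x (Polynomial.X : Polynomial (MvPolynomial σ ℝ)) = 0 := by
  apply Polynomial.ext; intro n
  simp [Polynomial.coeff_X, apply_ite (pderiv x), pderiv_one]

@[simp] lemma Dl_intCast (x : σ) (z : ℤ) :
    Dl x (z : Polynomial (MvPolynomial σ ℝ)) = 0 := by
  rw [← Polynomial.C_eq_intCast, Dl_C,
    ← map_intCast (MvPolynomial.C : ℝ →+* MvPolynomial σ ℝ) z, pderiv_C, Polynomial.C_0]

lemma Dl_prod (x : σ) {ι : Type*} [DecidableEq ι] (s : Finset ι)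
    (f : ι → Polynomial (MvPolynomial σ ℝ)) :
    Dl x (∏ i ∈ s, f i) = ∑ i ∈ s, Dl x (f i) * ∏ j ∈ s.erase i, f j := by
  classical
  refine Finset.induction_on s (by simp) ?_
  intro a s ha ih
  rw [Finset.prod_insert ha, Dl_mul, ih, Finset.mul_sum, Finset.sum_insert ha,
    Finset.erase_insert ha]
  refine congrArg₂ (· + ·) rfl ?_
  refine Finset.sum_congr rfl fun i hi => ?_
  have hia : a ≠ i := fun h => ha (h ▸ hi)
  rw [Finset.erase_insert_of_ne hia,
    Finset.prod_insert (fun h => ha (Finset.mem_of_mem_erase h))]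
  ring


/-! ### Derivative of a determinant -/

lemma det_eq_sum_row {n : ℕ} (B : Matrix (Fin n) (Fin n) (Polynomial (MvPolynomial σ ℝ))) :
    B.det = ∑ p : Equiv.Perm (Fin n),
      ((Equiv.Perm.sign p : ℤ) : Polynomial (MvPolynomial σ ℝ)) * ∏ j, B j (p j) := by
  rw [← Matrix.det_transpose, Matrix.det_apply']
  rfl

lemma Dl_det (x : σ) {n : ℕ} (A : Matrix (Fin n) (Fin n) (Polynomial (MvPolynomial σ ℝ))) :
    Dl x A.det = ∑ i, (A.updateRow i fun j => Dl x (A i j)).det := by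
  rw [det_eq_sum_row, map_sum]
  have h1 : ∀ p : Equiv.Perm (Fin n),
      Dl x (((Equiv.Perm.sign p : ℤ) : Polynomial (MvPolynomial σ ℝ)) * ∏ j, A j (p j))
        = ∑ i, ((Equiv.Perm.sign p : ℤ) : Polynomial (MvPolynomial σ ℝ)) *
            (Dl x (A i (p i)) * ∏ j ∈ Finset.univ.erase i, A j (p j)) := by
    intro p
    rw [Dl_mul, Dl_intCast, zero_mul, zero_add, Dl_prod, Finset.mul_sum]
  have h2 : ∀ i : Fin n, (A.updateRow i fun j => Dl x (A i j)).det
      = ∑ p : Equiv.Perm (Fin n), ((Equiv.Perm.sign p : ℤ) : Polynomial (MvPolynomial σ ℝ)) *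
          (Dl x (A i (p i)) * ∏ j ∈ Finset.univ.erase i, A j (p j)) := by
    intro i
    rw [det_eq_sum_row]
    refine Finset.sum_congr rfl fun p _ => ?_
    congr 1
    rw [← Finset.mul_prod_erase Finset.univ _ (Finset.mem_univ i)]
    congr 1
    · rw [Matrix.updateRow_self]
    · exact Finset.prod_congr rfl fun j hj =>
        congrFun (Matrix.updateRow_ne (Finset.ne_of_mem_erase hj)) (p j)
  simp_rw [h1, h2]
  exact Finset.sum_comm

/-! ### The leading principal block -/

lemma Ipoly_eq {N l : ℕ} (hl : l ≤ N) :
    Ipoly l hl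
      = (Matrix.charmatrix ((Umat N).submatrix (Fin.castLE hl) (Fin.castLE hl))).det := by
  unfold Ipoly
  congr 1
  ext a b
  by_cases h : a = b
  · subst h
    simp [Matrix.submatrix_apply, Matrix.charmatrix_apply_eq]
  · have h' : Fin.castLE hl a ≠ Fin.castLE hl b := fun hc => h (Fin.castLE_injective hl hc)
    simp [Matrix.submatrix_apply, Matrix.charmatrix_apply_ne _ _ _ h',
      Matrix.charmatrix_apply_ne _ _ _ h]

lemma Dl_charmatrix_entry {N l : ℕ} (hl : l ≤ N) (x : Fin N × Fin N) (a b : Fin l) :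
    Dl x (Matrix.charmatrix ((Umat N).submatrix (Fin.castLE hl) (Fin.castLE hl)) a b)
      = - Polynomial.C
          (if ((Fin.castLE hl a : Fin N), (Fin.castLE hl b : Fin N)) = x then 1 else 0) := by
  rw [Matrix.charmatrix_apply, map_sub]
  have hdiag : Dl x ((Matrix.diagonal fun _ : Fin l =>
      (Polynomial.X : Polynomial (MvPolynomial (Fin N × Fin N) ℝ))) a b) = 0 := by
    by_cases h : a = b
    · subst h; simp [Matrix.diagonal_apply_eq]
    · simp [Matrix.diagonal_apply_ne _ h]
  rw [hdiag, zero_sub, Dl_C]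
  congr 2
  rw [show (Umat N).submatrix (Fin.castLE hl) (Fin.castLE hl) a b
      = MvPolynomial.X ((Fin.castLE hl a : Fin N), (Fin.castLE hl b : Fin N)) from rfl,
    MvPolynomial.pderiv_X]
  simp [Pi.single_apply]

lemma Dl_det_block {N l : ℕ} (hl : l ≤ N) (a b : Fin l) :
    Dl ((Fin.castLE hl a : Fin N), (Fin.castLE hl b : Fin N))
        (Matrix.charmatrix ((Umat N).submatrix (Fin.castLE hl) (Fin.castLE hl))).det
      = - (Matrix.charmatrix ((Umat N).submatrix (Fin.castLE hl) (Fin.castLE hl))).adjugate b a := by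
  set A := Matrix.charmatrix ((Umat N).submatrix (Fin.castLE hl) (Fin.castLE hl)) with hA
  rw [Dl_det]
  rw [Finset.sum_eq_single a]
  · have hrow : (fun j => Dl ((Fin.castLE hl a : Fin N), (Fin.castLE hl b : Fin N)) (A a j))
        = (-1 : Polynomial (MvPolynomial (Fin N × Fin N) ℝ)) •
          (Pi.single b 1 : Fin l → Polynomial (MvPolynomial (Fin N × Fin N) ℝ)) := by
      funext j
      rw [hA, Dl_charmatrix_entry]
      by_cases h : j = b
      · subst h; simp
      · have hne : ((Fin.castLE hl a : Fin N), (Fin.castLE hl j : Fin N))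
            ≠ ((Fin.castLE hl a : Fin N), (Fin.castLE hl b : Fin N)) := by
          intro hc
          exact h (Fin.castLE_injective hl (congrArg Prod.snd hc))
      -- entry is -C 0 = 0; single is 0
        simp [hne, Pi.single_apply, h]
    rw [hrow, Matrix.det_updateRow_smul, Matrix.adjugate_apply]
    ring
  · intro i _ hia
    apply Matrix.det_eq_zero_of_row_eq_zero i
    intro j
    rw [Matrix.updateRow_self]
    rw [hA, Dl_charmatrix_entry]
    have hne : ((Fin.castLE hl i : Fin N), (Fin.castLE hl j : Fin N))
        ≠ ((Fin.castLE hl a : Fin N), (Fin.castLE hl b : Fin N)) := by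
      intro hc
      exact hia (Fin.castLE_injective hl (congrArg Prod.fst hc))
    simp [hne]
  · intro h; exact absurd (Finset.mem_univ a) h

lemma Dl_det_outside {N l : ℕ} (hl : l ≤ N) (x : Fin N × Fin N)
    (hx : ¬ ((x.1 : ℕ) < l ∧ (x.2 : ℕ) < l)) :
    Dl x (Matrix.charmatrix ((Umat N).submatrix (Fin.castLE hl) (Fin.castLE hl))).det = 0 := by
  rw [Dl_det]
  refine Finset.sum_eq_zero fun i _ => ?_
  apply Matrix.det_eq_zero_of_row_eq_zero i
  intro j
  rw [Matrix.updateRow_self, Dl_charmatrix_entry]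
  have hne : ((Fin.castLE hl i : Fin N), (Fin.castLE hl j : Fin N)) ≠ x := by
    intro hc
    exact hx (by rw [← hc]; exact ⟨i.isLt, j.isLt⟩)
  simp [hne]

lemma pderiv_Ipoly_outside {N k : ℕ} (hk : k ≤ N) (m : ℕ) (x : Fin N × Fin N)
    (hx : ¬ ((x.1 : ℕ) < k ∧ (x.2 : ℕ) < k)) :
    MvPolynomial.pderiv x ((Ipoly k hk).coeff m) = 0 := by
  rw [← Dl_coeff, Ipoly_eq hk, Dl_det_outside hk x hx, Polynomial.coeff_zero]

lemma pderiv_Ipoly_in {N l : ℕ} (hl : l ≤ N) (a b : Fin l) (m : ℕ) :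
    MvPolynomial.pderiv ((Fin.castLE hl a : Fin N), (Fin.castLE hl b : Fin N))
        ((Ipoly l hl).coeff m)
      = (- (Matrix.charmatrix
          ((Umat N).submatrix (Fin.castLE hl) (Fin.castLE hl))).adjugate b a).coeff m := by
  rw [← Dl_coeff, Ipoly_eq hl, Dl_det_block hl]

/-! ### Commutation of the adjugate with the matrix -/

lemma adj_comm {N n : ℕ} (M : Matrix (Fin n) (Fin n) (MvPolynomial (Fin N × Fin N) ℝ)) :
    (Matrix.charmatrix M).adjugate * M.map Polynomial.C
      = M.map Polynomial.C * (Matrix.charmatrix M).adjugate := by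
  have hM : M.map Polynomial.C = Matrix.scalar (Fin n) Polynomial.X - Matrix.charmatrix M := by
    rw [Matrix.charmatrix, sub_sub_cancel, RingHom.mapMatrix_apply]
  rw [hM, mul_sub, sub_mul]
  refine congrArg₂ (· - ·) ?_ ?_
  · exact ((Matrix.scalar_commute Polynomial.X (fun r => Commute.all _ _) _).eq).symm
  · exact (Matrix.adjugate_mul _).trans (Matrix.mul_adjugate _).symm

/-! ### Summation helpers -/

lemma sum_extend {M : Type*} [AddCommMonoid M] {N l : ℕ} (hl : l ≤ N) (f : Fin N → M)
    (hf : ∀ x : Fin N, ¬ ((x : ℕ) < l) → f x = 0) :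
    ∑ x : Fin N, f x = ∑ y : Fin l, f (Fin.castLE hl y) := by
  simp_rw [← Fin.coe_castLEEmb hl]
  rw [← Finset.sum_map Finset.univ (Fin.castLEEmb hl) f]
  exact (Finset.sum_subset (Finset.subset_univ _) (fun x _ hx =>
    hf x (fun hlt => hx (Finset.mem_map.2
      ⟨⟨(x : ℕ), hlt⟩, Finset.mem_univ _, Fin.ext rfl⟩)))).symm

lemma sum_swap4 {α β : Type*} [Fintype α] [AddCommMonoid β] (G : α → α → α → α → β) :
    (∑ i : α, ∑ j : α, ∑ k : α, ∑ l : α, G i j k l)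
      = ∑ k : α, ∑ l : α, ∑ i : α, ∑ j : α, G i j k l := by
  have h := Finset.sum_comm (s := (Finset.univ : Finset (α × α)))
    (t := (Finset.univ : Finset (α × α))) (f := fun p q => G p.1 p.2 q.1 q.2)
  simpa [Fintype.sum_prod_type] using h

lemma pb_antisymm {N : ℕ} (P Q : MvPolynomial (Fin N × Fin N) ℝ) : pb P Q = - pb Q P := by
  unfold pb
  rw [sum_swap4 (fun i j k l => MvPolynomial.pderiv (i, j) Q * MvPolynomial.pderiv (k, l) P *
      ((if j = k then u i l else 0) - (if l = i then u k j else 0)))]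
  rw [← Finset.sum_neg_distrib]
  refine Finset.sum_congr rfl fun i _ => ?_
  rw [← Finset.sum_neg_distrib]
  refine Finset.sum_congr rfl fun j _ => ?_
  rw [← Finset.sum_neg_distrib]
  refine Finset.sum_congr rfl fun a _ => ?_
  rw [← Finset.sum_neg_distrib]
  refine Finset.sum_congr rfl fun b _ => ?_
  ring

/-! ### The Casimir property within a block -/

lemma casimir {N l : ℕ} (hl : l ≤ N) (m' : ℕ) (i j : Fin N)
    (hi : (i : ℕ) < l) (hj : (j : ℕ) < l) :
    ∑ a : Fin N, ∑ b : Fin N, MvPolynomial.pderiv (a, b) ((Ipoly l hl).coeff m') *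
      ((if j = a then u i b else 0) - (if b = i then u a j else 0)) = 0 := by
  set Q := (Ipoly l hl).coeff m' with hQ
  set A := Matrix.charmatrix ((Umat N).submatrix (Fin.castLE hl) (Fin.castLE hl)) with hAdef
  set MC := ((Umat N).submatrix (Fin.castLE hl) (Fin.castLE hl)).map Polynomial.C with hMC
  set i' : Fin l := ⟨(i : ℕ), hi⟩ with hi'def
  set j' : Fin l := ⟨(j : ℕ), hj⟩ with hj'def
  have hi' : (Fin.castLE hl i' : Fin N) = i := Fin.ext rfl
  have hj' : (Fin.castLE hl j' : Fin N) = j := Fin.ext rfl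
  have hsplit : ∀ a b : Fin N,
      MvPolynomial.pderiv (a, b) Q *
          ((if j = a then u i b else 0) - (if b = i then u a j else 0))
        = (if j = a then MvPolynomial.pderiv (a, b) Q * u i b else 0)
            - (if b = i then MvPolynomial.pderiv (a, b) Q * u a j else 0) := by
    intro a b
    split_ifs <;> ring
  simp_rw [hsplit, Finset.sum_sub_distrib]
  have hS1 : (∑ a : Fin N, ∑ b : Fin N,
        if j = a then MvPolynomial.pderiv (a, b) Q * u i b else 0)
      = ∑ b : Fin N, MvPolynomial.pderiv (j, b) Q * u i b := by
    rw [Finset.sum_comm]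
    refine Finset.sum_congr rfl fun b _ => ?_
    exact Fintype.sum_ite_eq j (fun a => MvPolynomial.pderiv (a, b) Q * u i b)
  have hS2 : (∑ a : Fin N, ∑ b : Fin N,
        if b = i then MvPolynomial.pderiv (a, b) Q * u a j else 0)
      = ∑ a : Fin N, MvPolynomial.pderiv (a, i) Q * u a j := by
    refine Finset.sum_congr rfl fun a _ => ?_
    exact Fintype.sum_ite_eq' i (fun b => MvPolynomial.pderiv (a, b) Q * u a j)
  rw [hS1, hS2]
  have hE1 : (∑ b : Fin N, MvPolynomial.pderiv (j, b) Q * u i b)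
      = ((- (MC * A.adjugate)) i' j').coeff m' := by
    rw [sum_extend hl _ (fun b hb => by
      rw [hQ, pderiv_Ipoly_outside hl m' (j, b) (fun hc => hb hc.2), zero_mul])]
    have step : ∀ b : Fin l,
        MvPolynomial.pderiv (j, (Fin.castLE hl b : Fin N)) Q * u i (Fin.castLE hl b)
          = ((- A.adjugate b j') * Polynomial.C (u i (Fin.castLE hl b))).coeff m' := by
      intro b
      rw [hQ, ← hj', pderiv_Ipoly_in hl j' b m', Polynomial.coeff_mul_C, hAdef]
    simp_rw [step]
    rw [← Polynomial.finset_sum_coeff]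
    congr 1
    rw [Matrix.neg_apply, Matrix.mul_apply, ← Finset.sum_neg_distrib]
    refine Finset.sum_congr rfl fun b _ => ?_
    have : MC i' b = Polynomial.C (u i (Fin.castLE hl b)) := by
      rw [hMC, Matrix.map_apply, Matrix.submatrix_apply, hi']
      rfl
    rw [this]
    ring
  have hE2 : (∑ a : Fin N, MvPolynomial.pderiv (a, i) Q * u a j)
      = ((- (A.adjugate * MC)) i' j').coeff m' := by
    rw [sum_extend hl _ (fun a ha => by
      rw [hQ, pderiv_Ipoly_outside hl m' (a, i) (fun hc => ha hc.1), zero_mul])]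
    have step : ∀ a : Fin l,
        MvPolynomial.pderiv ((Fin.castLE hl a : Fin N), i) Q * u (Fin.castLE hl a) j
          = ((- A.adjugate i' a) * Polynomial.C (u (Fin.castLE hl a) j)).coeff m' := by
      intro a
      rw [hQ, ← hi', pderiv_Ipoly_in hl a i' m', Polynomial.coeff_mul_C, hAdef]
    simp_rw [step]
    rw [← Polynomial.finset_sum_coeff]
    congr 1
    rw [Matrix.neg_apply, Matrix.mul_apply, ← Finset.sum_neg_distrib]
    refine Finset.sum_congr rfl fun a _ => ?_
    have : MC a j' = Polynomial.C (u (Fin.castLE hl a) j) := by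
      rw [hMC, Matrix.map_apply, Matrix.submatrix_apply, hj']
      rfl
    rw [this]
    ring
  rw [hE1, hE2, ← Polynomial.coeff_sub]
  have hcomm : A.adjugate * MC = MC * A.adjugate := by
    rw [hAdef, hMC]
    exact adj_comm _
  have : ((- (MC * A.adjugate)) i' j') - ((- (A.adjugate * MC)) i' j') = 0 := by
    rw [hcomm]
    ring
  rw [this, Polynomial.coeff_zero]

/-! ### Main theorem -/

lemma gz_main {N k l : ℕ} (hk : k ≤ N) (hl : l ≤ N) (hkl : k ≤ l) (m m' : ℕ) :
    pb ((Ipoly k hk).coeff m) ((Ipoly l hl).coeff m') = 0 := by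
  unfold pb
  refine Finset.sum_eq_zero fun i _ => Finset.sum_eq_zero fun j _ => ?_
  by_cases hij : (i : ℕ) < k ∧ (j : ℕ) < k
  · have h := casimir hl m' i j (lt_of_lt_of_le hij.1 hkl) (lt_of_lt_of_le hij.2 hkl)
    calc (∑ a : Fin N, ∑ b : Fin N,
          MvPolynomial.pderiv (i, j) ((Ipoly k hk).coeff m) *
            MvPolynomial.pderiv (a, b) ((Ipoly l hl).coeff m') *
            ((if j = a then u i b else 0) - (if b = i then u a j else 0)))
        = MvPolynomial.pderiv (i, j) ((Ipoly k hk).coeff m) *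
            ∑ a : Fin N, ∑ b : Fin N,
              MvPolynomial.pderiv (a, b) ((Ipoly l hl).coeff m') *
                ((if j = a then u i b else 0) - (if b = i then u a j else 0)) := by
          simp_rw [Finset.mul_sum, mul_assoc]
      _ = 0 := by rw [h, mul_zero]
  · refine Finset.sum_eq_zero fun a _ => Finset.sum_eq_zero fun b _ => ?_
    rw [pderiv_Ipoly_outside hk m (i, j) (by simpa using hij), zero_mul, zero_mul]

theorem gelfand_zetlin_commutes (N : ℕ) (k l : ℕ) (hk1 : 1 ≤ k) (hk : k ≤ N)
    (hl1 : 1 ≤ l) (hl : l ≤ N) (m m' : ℕ) :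
    pb ((Ipoly k hk).coeff m) ((Ipoly l hl).coeff m') = 0 := by
  rcases le_total k l with hkl | hkl
  · exact gz_main hk hl hkl m m'
  · rw [pb_antisymm, gz_main hl hk hkl m' m, neg_zero]
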